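/- arXiv:2412.13346 — 3 statements merged into one kernel-verified Lean document; each statement's English description precedes it below -/
import Mathlib

section
/- Let p, γ ∈ ℝⁿ be linearly independent. Then the minimum over unit vectors a ∈ Sⁿ⁻¹ of f(a) = ⟨p,a⟩/√(1+⟨γ,a⟩²) equals -√(pᵀ(I - γγᵀ/(1+|γ|²))p). -/
open Matrix

private lemma dp_self_nonneg {n : ℕ} (v : Fin n → ℝ) : 0 ≤ v ⬝ᵥ v :=
  Finset.sum_nonneg fun i _ => mul_self_nonneg (v i)

/-- For linearly independent `p, γ ∈ ℝⁿ`, the minimum over unit vectors `a` of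
`f(a) = ⟨p,a⟩/√(1+⟨γ,a⟩²)` equals `-√(pᵀ(I - γγᵀ/(1+|γ|²))p)`. -/
theorem stmt4 (n : ℕ) (p γ : Fin n → ℝ)
    (hind : LinearIndependent ℝ ![p, γ])
    (A : Matrix (Fin n) (Fin n) ℝ)
    (hA : A = 1 - (1 / (1 + γ ⬝ᵥ γ)) • vecMulVec γ γ)
    (f : (Fin n → ℝ) → ℝ)
    (hf : ∀ a, f a = (p ⬝ᵥ a) / Real.sqrt (1 + (γ ⬝ᵥ a) ^ 2)) :
    IsLeast (f '' {a : Fin n → ℝ | a ⬝ᵥ a = 1})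
      (-Real.sqrt (p ⬝ᵥ A.mulVec p)) := by
  obtain ⟨hγ0, hpair⟩ := linearIndependent_fin2.mp hind
  simp only [Matrix.cons_val_one, Matrix.head_cons, Matrix.cons_val_zero] at hγ0 hpair
  have hp0 : p ≠ 0 := fun h => hpair 0 (by simp [h])
  have hgg : 0 < γ ⬝ᵥ γ :=
    lt_of_le_of_ne (dp_self_nonneg γ) (fun h => hγ0 (dotProduct_self_eq_zero.mp h.symm))
  have hpp : 0 < p ⬝ᵥ p :=
    lt_of_le_of_ne (dp_self_nonneg p) (fun h => hp0 (dotProduct_self_eq_zero.mp h.symm))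
  have hD : (0:ℝ) < 1 + γ ⬝ᵥ γ := by linarith
  set D : ℝ := 1 + γ ⬝ᵥ γ with hDdef
  have hDne : D ≠ 0 := ne_of_gt hD
  set pg : ℝ := p ⬝ᵥ γ with hpgdef
  set u : Fin n → ℝ := p - (pg / D) • γ with hu
  set M2 : ℝ := p ⬝ᵥ u with hM2def
  -- Cauchy-Schwarz : pg^2 ≤ (p⬝ᵥp)*(γ⬝ᵥγ)
  have hCS : pg ^ 2 ≤ (p ⬝ᵥ p) * (γ ⬝ᵥ γ) := by
    have h0 : 0 ≤ ((γ ⬝ᵥ γ) • p - pg • γ) ⬝ᵥ ((γ ⬝ᵥ γ) • p - pg • γ) := dp_self_nonneg _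
    simp only [sub_dotProduct, dotProduct_sub, smul_dotProduct, dotProduct_smul,
      smul_eq_mul, dotProduct_comm γ p, ← hpgdef] at h0
    nlinarith [h0, hgg]
  have hM2 : M2 = p ⬝ᵥ p - pg ^ 2 / D := by
    simp only [hM2def, hu, dotProduct_sub, dotProduct_smul, smul_eq_mul, ← hpgdef]
    ring
  have hM2pos : 0 < M2 := by
    rw [hM2]
    rw [lt_sub_iff_add_lt, zero_add, div_lt_iff₀ hD]
    nlinarith [hCS, hpp, hgg]
  have hug : γ ⬝ᵥ u = pg / D := by
    simp only [hu, dotProduct_sub, dotProduct_smul, smul_eq_mul, dotProduct_comm γ p, ← hpgdef]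
    field_simp
    ring
  have huu : u ⬝ᵥ u = M2 - (pg / D) ^ 2 := by
    have : u ⬝ᵥ u = u ⬝ᵥ p - (pg / D) * (u ⬝ᵥ γ) := by
      simp only [hu, dotProduct_sub, dotProduct_smul, smul_eq_mul]
    rw [this, dotProduct_comm u p, ← hM2def, dotProduct_comm u γ, hug]
    ring
  have hune : u ≠ 0 := by
    intro h
    apply hpair (pg / D)
    have := sub_eq_zero.mp (hu ▸ h)
    exact this.symm
  have huupos : 0 < u ⬝ᵥ u :=
    lt_of_le_of_ne (dp_self_nonneg u) (fun h => hune (dotProduct_self_eq_zero.mp h.symm))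
  -- A.mulVec p = u
  have hvm : ∀ i, ((vecMulVec γ γ).mulVec p) i = γ i * (γ ⬝ᵥ p) := fun i => by
    simp [Matrix.mulVec, vecMulVec, dotProduct, Finset.mul_sum, mul_assoc]
  have hAu : A.mulVec p = u := by
    funext i
    rw [hA, Matrix.sub_mulVec, Matrix.smul_mulVec, Matrix.one_mulVec]
    simp only [Pi.sub_apply, Pi.smul_apply, smul_eq_mul, hvm i, hu,
      dotProduct_comm γ p, ← hpgdef]
    ring
  have hgoalval : p ⬝ᵥ A.mulVec p = M2 := by rw [hAu, ← hM2def]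
  rw [hgoalval]
  have hsqrtM2 : Real.sqrt M2 > 0 := Real.sqrt_pos.mpr hM2pos
  -- key inequality
  have hkey : ∀ a : Fin n → ℝ, a ⬝ᵥ a = 1 → (p ⬝ᵥ a) ^ 2 ≤ M2 * (1 + (γ ⬝ᵥ a) ^ 2) := by
    intro a ha
    set z : Fin n → ℝ := M2 • a - (p ⬝ᵥ a) • u with hz
    have h0 : 0 ≤ z ⬝ᵥ z + (γ ⬝ᵥ z) ^ 2 := add_nonneg (dp_self_nonneg z) (sq_nonneg _)
    have hua : u ⬝ᵥ a = p ⬝ᵥ a - (pg / D) * (γ ⬝ᵥ a) := by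
      simp only [hu, sub_dotProduct, smul_dotProduct, smul_eq_mul]
    have hzz : z ⬝ᵥ z = M2 ^ 2 * (a ⬝ᵥ a) - 2 * M2 * (p ⬝ᵥ a) * (u ⬝ᵥ a)
        + (p ⬝ᵥ a) ^ 2 * (u ⬝ᵥ u) := by
      simp only [hz, sub_dotProduct, dotProduct_sub, smul_dotProduct, dotProduct_smul,
        smul_eq_mul, dotProduct_comm a u]
      ring
    have hgz : γ ⬝ᵥ z = M2 * (γ ⬝ᵥ a) - (p ⬝ᵥ a) * (γ ⬝ᵥ u) := by
      simp only [hz, dotProduct_sub, dotProduct_smul, smul_eq_mul]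
    rw [hzz, hgz, ha, hua, hug, huu] at h0
    nlinarith [h0, hM2pos]
  constructor
  · -- membership : attained at a0 = -(r⁻¹) • u
    set r : ℝ := Real.sqrt (u ⬝ᵥ u) with hr
    have hrpos : 0 < r := Real.sqrt_pos.mpr huupos
    have hr2 : r ^ 2 = u ⬝ᵥ u := Real.sq_sqrt huupos.le
    refine ⟨(-(r⁻¹)) • u, ?_, ?_⟩
    · show ((-(r⁻¹)) • u) ⬝ᵥ ((-(r⁻¹)) • u) = 1
      simp only [smul_dotProduct, dotProduct_smul, smul_eq_mul]
      rw [← hr2]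
      field_simp
    · rw [hf]
      have hpa : p ⬝ᵥ ((-(r⁻¹)) • u) = -(r⁻¹) * M2 := by
        simp only [dotProduct_smul, smul_eq_mul, ← hM2def]
      have hga : γ ⬝ᵥ ((-(r⁻¹)) • u) = -(r⁻¹) * (pg / D) := by
        simp only [dotProduct_smul, smul_eq_mul, hug]
      rw [hpa, hga]
      have hrne : r ≠ 0 := ne_of_gt hrpos
      have hc : (pg / D) ^ 2 = M2 - r ^ 2 := by rw [hr2, huu]; ring
      have h1 : 1 + (-(r⁻¹) * (pg / D)) ^ 2 = M2 / r ^ 2 := by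
        have : (-(r⁻¹) * (pg / D)) ^ 2 = (M2 - r ^ 2) * (r ^ 2)⁻¹ := by
          rw [← hc]; ring
        rw [this]
        field_simp
        ring
      rw [h1, Real.sqrt_div hM2pos.le, Real.sqrt_sq hrpos.le]
      have h2 : -(r⁻¹) * M2 / (Real.sqrt M2 / r) = -(M2 / Real.sqrt M2) := by
        have hm := Real.mul_self_sqrt hM2pos.le
        field_simp
      rw [h2, Real.div_sqrt]
  · -- lower bound
    rintro y ⟨a, ha, rfl⟩
    have ha' : a ⬝ᵥ a = 1 := ha
    rw [hf]
    have ht : (0:ℝ) < 1 + (γ ⬝ᵥ a) ^ 2 := by positivity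
    have hts : 0 < Real.sqrt (1 + (γ ⬝ᵥ a) ^ 2) := Real.sqrt_pos.mpr ht
    rw [le_div_iff₀ hts]
    have h1 : -(p ⬝ᵥ a) ≤ Real.sqrt (M2 * (1 + (γ ⬝ᵥ a) ^ 2)) := by
      have h2 := Real.sqrt_le_sqrt (hkey a ha')
      rw [Real.sqrt_sq_eq_abs] at h2
      linarith [neg_abs_le (p ⬝ᵥ a)]
    rw [Real.sqrt_mul hM2pos.le] at h1
    nlinarith [h1]
end

section
/- Let p, γ ∈ ℝⁿ be linearly independent and define f(a) = ⟨p,a⟩/√(1+⟨γ,a⟩²) on the unit sphere. Then the minimizer of f over Sⁿ⁻¹ is a* = -((1+|γ|²)p - ⟨p,γ⟩γ)/√(|p|²(1+|γ|²)² - ⟨p,γ⟩²(2+|γ|²)). -/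
set_option maxHeartbeats 1000000


open Matrix

/-- For linearly independent `p, γ ∈ ℝⁿ`, the minimizer of
`f(a) = ⟨p,a⟩/√(1+⟨γ,a⟩²)` over the unit sphere is
`a* = -((1+|γ|²)p - ⟨p,γ⟩γ)/√(|p|²(1+|γ|²)² - ⟨p,γ⟩²(2+|γ|²))`. -/
theorem stmt5 (n : ℕ) (p γ : Fin n → ℝ)
    (hind : LinearIndependent ℝ ![p, γ])
    (f : (Fin n → ℝ) → ℝ)
    (hf : ∀ a, f a = (p ⬝ᵥ a) / Real.sqrt (1 + (γ ⬝ᵥ a) ^ 2))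
    (astar : Fin n → ℝ)
    (hastar : astar =
      -(Real.sqrt ((p ⬝ᵥ p) * (1 + γ ⬝ᵥ γ) ^ 2 - (p ⬝ᵥ γ) ^ 2 * (2 + γ ⬝ᵥ γ)))⁻¹ •
        ((1 + γ ⬝ᵥ γ) • p - (p ⬝ᵥ γ) • γ)) :
    astar ⬝ᵥ astar = 1 ∧
    (∀ a : Fin n → ℝ, a ⬝ᵥ a = 1 → f astar ≤ f a) ∧
    (∀ a : Fin n → ℝ, a ⬝ᵥ a = 1 → f a = f astar → a = astar) := by
  have hpair := (LinearIndependent.pair_iff (R := ℝ)).mp hind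
  set P := p ⬝ᵥ p with hPdef
  set G := γ ⬝ᵥ γ with hGdef
  set C := p ⬝ᵥ γ with hCdef
  have hγp : γ ⬝ᵥ p = C := dotProduct_comm γ p
  have dpnn : ∀ x : Fin n → ℝ, 0 ≤ x ⬝ᵥ x := fun x =>
    Finset.sum_nonneg fun i _ => mul_self_nonneg (x i)
  have hγ0 : γ ≠ 0 := by
    intro h
    exact one_ne_zero (hpair 0 1 (by simp [h])).2
  have hp0 : p ≠ 0 := by
    intro h
    exact one_ne_zero (hpair 1 0 (by simp [h])).1
  have hG : 0 < G := lt_of_le_of_ne (dpnn γ) fun h => hγ0 (dotProduct_self_eq_zero.mp h.symm)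
  have hP : 0 < P := lt_of_le_of_ne (dpnn p) fun h => hp0 (dotProduct_self_eq_zero.mp h.symm)
  have hΔ : 0 < P * G - C ^ 2 := by
    have hw0 : G • p - C • γ ≠ 0 := by
      intro h
      have := hpair G (-C) (by rw [neg_smul, ← sub_eq_add_neg]; exact h)
      exact hG.ne' this.1
    have h1 : 0 < (G • p - C • γ) ⬝ᵥ (G • p - C • γ) :=
      lt_of_le_of_ne (dpnn _) fun h => hw0 (dotProduct_self_eq_zero.mp h.symm)
    have hexp : (G • p - C • γ) ⬝ᵥ (G • p - C • γ) = G * (P * G - C ^ 2) := by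
      simp only [sub_dotProduct, dotProduct_sub, smul_dotProduct, dotProduct_smul, smul_eq_mul,
        hγp, ← hPdef, ← hGdef, ← hCdef]
      ring
    nlinarith
  set E := P * (1 + G) - C ^ 2 with hEdef
  have hE : 0 < E := by nlinarith
  set D := P * (1 + G) ^ 2 - C ^ 2 * (2 + G) with hDdef
  have hD : 0 < D := by nlinarith
  set sD := Real.sqrt D with hsDdef
  have hsD : 0 < sD := Real.sqrt_pos.mpr hD
  have hsD2 : sD ^ 2 = D := Real.sq_sqrt hD.le
  -- astar facts
  have hpa : p ⬝ᵥ astar = -(E / sD) := by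
    rw [hastar]
    simp only [dotProduct_smul, dotProduct_sub, smul_eq_mul, ← hCdef, ← hPdef]
    field_simp
    ring
  have hγa : γ ⬝ᵥ astar = -(C / sD) := by
    rw [hastar]
    simp only [dotProduct_smul, dotProduct_sub, smul_eq_mul, hγp, ← hGdef]
    field_simp
    ring
  have hvv : ((1 + G) • p - C • γ) ⬝ᵥ ((1 + G) • p - C • γ) = D := by
    simp only [smul_dotProduct, dotProduct_smul, sub_dotProduct, dotProduct_sub, smul_eq_mul,
      hγp, ← hPdef, ← hGdef, ← hCdef, hDdef]
    ring
  have hunit : astar ⬝ᵥ astar = 1 := by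
    rw [hastar, smul_dotProduct, dotProduct_smul, hvv, smul_eq_mul, smul_eq_mul]
    field_simp
    linear_combination (-1 : ℝ) * hsD2
  -- key inequality and equality characterization
  have key : ∀ a : Fin n → ℝ, a ⬝ᵥ a = 1 →
      (1 + G) * (p ⬝ᵥ a) ^ 2 ≤ E * (1 + (γ ⬝ᵥ a) ^ 2) := by
    intro a ha
    set u := p ⬝ᵥ a with hudef
    set v := γ ⬝ᵥ a with hvdef
    have hap : a ⬝ᵥ p = u := dotProduct_comm a p
    have haγ : a ⬝ᵥ γ = v := dotProduct_comm a γ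
    set w := (P * G - C ^ 2) • a - ((G * u - C * v) • p + (P * v - C * u) • γ) with hwdef
    have hww : w ⬝ᵥ w =
        (P * G - C ^ 2) * ((P * G - C ^ 2) - (G * u ^ 2 - 2 * C * u * v + P * v ^ 2)) := by
      simp only [hwdef, sub_dotProduct, dotProduct_sub, add_dotProduct, dotProduct_add,
        smul_dotProduct, dotProduct_smul, smul_eq_mul, ha, hap, haγ, hγp,
        ← hPdef, ← hGdef, ← hCdef, ← hudef, ← hvdef]
      ring
    have hs : 0 ≤ (P * G - C ^ 2) - (G * u ^ 2 - 2 * C * u * v + P * v ^ 2) := by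
      have := dpnn w
      rw [hww] at this
      exact nonneg_of_mul_nonneg_right this hΔ
    have hid : (P * G - C ^ 2) * (E * (1 + v ^ 2) - (1 + G) * u ^ 2) =
        (C * u - E * v) ^ 2 +
          E * ((P * G - C ^ 2) - (G * u ^ 2 - 2 * C * u * v + P * v ^ 2)) := by
      rw [hEdef]; ring
    have h2 : 0 ≤ (P * G - C ^ 2) * (E * (1 + v ^ 2) - (1 + G) * u ^ 2) := by
      rw [hid]
      exact add_nonneg (sq_nonneg _) (mul_nonneg hE.le hs)
    linarith [nonneg_of_mul_nonneg_right h2 hΔ]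
  have keyeq : ∀ a : Fin n → ℝ, a ⬝ᵥ a = 1 →
      (1 + G) * (p ⬝ᵥ a) ^ 2 = E * (1 + (γ ⬝ᵥ a) ^ 2) →
      C * (p ⬝ᵥ a) = E * (γ ⬝ᵥ a) ∧
      (P * G - C ^ 2) • a =
        (G * (p ⬝ᵥ a) - C * (γ ⬝ᵥ a)) • p + (P * (γ ⬝ᵥ a) - C * (p ⬝ᵥ a)) • γ := by
    intro a ha heq
    set u := p ⬝ᵥ a with hudef
    set v := γ ⬝ᵥ a with hvdef
    have hap : a ⬝ᵥ p = u := dotProduct_comm a p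
    have haγ : a ⬝ᵥ γ = v := dotProduct_comm a γ
    set w := (P * G - C ^ 2) • a - ((G * u - C * v) • p + (P * v - C * u) • γ) with hwdef
    have hww : w ⬝ᵥ w =
        (P * G - C ^ 2) * ((P * G - C ^ 2) - (G * u ^ 2 - 2 * C * u * v + P * v ^ 2)) := by
      simp only [hwdef, sub_dotProduct, dotProduct_sub, add_dotProduct, dotProduct_add,
        smul_dotProduct, dotProduct_smul, smul_eq_mul, ha, hap, haγ, hγp,
        ← hPdef, ← hGdef, ← hCdef, ← hudef, ← hvdef]
      ring
    have hs : 0 ≤ (P * G - C ^ 2) - (G * u ^ 2 - 2 * C * u * v + P * v ^ 2) := by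
      have := dpnn w
      rw [hww] at this
      exact nonneg_of_mul_nonneg_right this hΔ
    have hid : (P * G - C ^ 2) * (E * (1 + v ^ 2) - (1 + G) * u ^ 2) =
        (C * u - E * v) ^ 2 +
          E * ((P * G - C ^ 2) - (G * u ^ 2 - 2 * C * u * v + P * v ^ 2)) := by
      rw [hEdef]; ring
    rw [show E * (1 + v ^ 2) - (1 + G) * u ^ 2 = 0 by rw [heq]; ring, mul_zero] at hid
    have h1 : (C * u - E * v) ^ 2 = 0 := by
      linarith [sq_nonneg (C * u - E * v), mul_nonneg hE.le hs]
    have hCu : C * u = E * v := by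
      have := sq_eq_zero_iff.mp h1
      linarith
    have hs0 : (P * G - C ^ 2) - (G * u ^ 2 - 2 * C * u * v + P * v ^ 2) = 0 := by
      have h2 : E * ((P * G - C ^ 2) - (G * u ^ 2 - 2 * C * u * v + P * v ^ 2)) = 0 := by
        linarith
      rcases mul_eq_zero.mp h2 with h | h
      · exact absurd h hE.ne'
      · exact h
    have hw0 : w = 0 := by
      rw [← dotProduct_self_eq_zero (v := w), hww, hs0, mul_zero]
    refine ⟨hCu, ?_⟩
    have := sub_eq_zero.mp hw0
    exact this
  have hDE : D = (1 + G) * E - C ^ 2 := by rw [hDdef, hEdef]; ring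
  set Ss := Real.sqrt (1 + (-(C / sD)) ^ 2) with hSsdef
  have hSsp : 0 < Ss := Real.sqrt_pos.mpr (by positivity)
  have hSs2 : Ss ^ 2 = 1 + (-(C / sD)) ^ 2 := Real.sq_sqrt (by positivity)
  have hESs : E * Ss ^ 2 = (1 + G) * (E / sD) ^ 2 := by
    rw [hSs2, hDE] at *
    field_simp
    linear_combination hsD2
  refine ⟨hunit, ?_, ?_⟩
  · -- minimality
    intro a ha
    rw [hf, hf, hpa, hγa]
    set u := p ⬝ᵥ a with hudef
    set v := γ ⬝ᵥ a with hvdef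
    set S := Real.sqrt (1 + v ^ 2) with hSdef
    have hSp : 0 < S := Real.sqrt_pos.mpr (by positivity)
    have hS2 : S ^ 2 = 1 + v ^ 2 := Real.sq_sqrt (by positivity)
    rw [div_le_div_iff₀ hSsp hSp]
    rcases le_or_gt 0 u with hu0 | hu0
    · linarith [mul_pos (div_pos hE hsD) hSp, mul_nonneg hu0 hSsp.le]
    · have hkey := key a ha
      have h2 : E * ((u * Ss) ^ 2) ≤ E * ((E / sD * S) ^ 2) := by
        calc E * ((u * Ss) ^ 2) = (E * Ss ^ 2) * u ^ 2 := by ring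
          _ = ((1 + G) * u ^ 2) * (E / sD) ^ 2 := by rw [hESs]; ring
          _ ≤ (E * (1 + v ^ 2)) * (E / sD) ^ 2 :=
              mul_le_mul_of_nonneg_right hkey (sq_nonneg _)
          _ = E * ((E / sD * S) ^ 2) := by rw [← hS2]; ring
      have hB2 : (u * Ss) ^ 2 ≤ (E / sD * S) ^ 2 := le_of_mul_le_mul_left h2 hE
      have hA : 0 < E / sD * S := mul_pos (div_pos hE hsD) hSp
      have hB : u * Ss < 0 := mul_neg_of_neg_of_pos hu0 hSsp
      have h4 := Real.sqrt_le_sqrt hB2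
      rw [Real.sqrt_sq_eq_abs, Real.sqrt_sq_eq_abs, abs_of_neg hB, abs_of_pos hA] at h4
      linarith
  · -- uniqueness
    intro a ha heq
    rw [hf, hf, hpa, hγa] at heq
    set u := p ⬝ᵥ a with hudef
    set v := γ ⬝ᵥ a with hvdef
    set S := Real.sqrt (1 + v ^ 2) with hSdef
    have hSp : 0 < S := Real.sqrt_pos.mpr (by positivity)
    have hS2 : S ^ 2 = 1 + v ^ 2 := Real.sq_sqrt (by positivity)
    have hu0 : u < 0 := by
      have hneg : u / S < 0 := by
        rw [heq]
        exact div_neg_of_neg_of_pos (neg_lt_zero.mpr (by positivity)) hSsp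
      rcases div_neg_iff.mp hneg with ⟨_, h⟩ | ⟨h, _⟩
      · linarith
      · exact h
    have hcross : u * Ss = -(E / sD) * S := (div_eq_div_iff hSp.ne' hSsp.ne').mp heq
    have hsq : (u * Ss) ^ 2 = (E / sD * S) ^ 2 := by rw [hcross]; ring
    have heqkey : (1 + G) * u ^ 2 = E * (1 + v ^ 2) := by
      have h3 : ((1 + G) * u ^ 2) * (E / sD) ^ 2 = (E * (1 + v ^ 2)) * (E / sD) ^ 2 := by
        calc ((1 + G) * u ^ 2) * (E / sD) ^ 2 = (E * Ss ^ 2) * u ^ 2 := by rw [hESs]; ring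
          _ = E * ((u * Ss) ^ 2) := by ring
          _ = E * ((E / sD * S) ^ 2) := by rw [hsq]
          _ = (E * (1 + v ^ 2)) * (E / sD) ^ 2 := by rw [← hS2]; ring
      exact mul_right_cancel₀ (pow_ne_zero 2 (div_pos hE hsD).ne') h3
    obtain ⟨hCu, hsmul⟩ := keyeq a ha heqkey
    rw [← hudef, ← hvdef] at hCu hsmul
    have hu2 : u ^ 2 * D = E ^ 2 := by
      rw [hDE]
      linear_combination E * heqkey - (C * u + E * v) * hCu
    have hu2'' : u ^ 2 = (E / sD) ^ 2 := by
      rw [div_pow, hsD2, eq_div_iff hD.ne']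
      exact hu2
    have hu2' : (u + E / sD) * (u - E / sD) = 0 := by linear_combination hu2''
    have huval : u = -(E / sD) := by
      rcases mul_eq_zero.mp hu2' with h | h
      · linarith
      · exfalso
        have : 0 < E / sD := div_pos hE hsD
        linarith [sub_eq_zero.mp h ▸ hu0]
    have hvval : v = -(C / sD) := by
      apply mul_left_cancel₀ hE.ne'
      rw [← hCu, huval]
      ring
    apply smul_right_injective (Fin n → ℝ) hΔ.ne'
    show (P * G - C ^ 2) • a = (P * G - C ^ 2) • astar
    rw [hsmul, huval, hvval, hastar, smul_smul, smul_sub, smul_smul, smul_smul]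
    have hc1 : G * (-(E / sD)) - C * (-(C / sD)) = (P * G - C ^ 2) * -sD⁻¹ * (1 + G) := by
      rw [hEdef]; field_simp; ring
    have hc2 : P * (-(C / sD)) - C * (-(E / sD)) = -((P * G - C ^ 2) * -sD⁻¹ * C) := by
      rw [hEdef]; field_simp; ring
    rw [hc1, hc2, neg_smul, ← sub_eq_add_neg]
end

section
/- Let γ = ∇M(x) with H_M the Hessian of M. Then the norm of the gradient formula g = [(pᵀγ)²H_Mγ - (1+|γ|²)(pᵀγ)H_Mp]/[√(pᵀAp)(1+|γ|²)²] satisfies |g| ≤ 2|p|·‖H_M‖, where A = I - γγᵀ/(1+|γ|²). -/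
open scoped RealInnerProductSpace

/-- Auxiliary scalar inequality. -/
lemma stmt14_aux (P c t r u : ℝ) (hP : 0 < P) (hc : 0 ≤ c) (ht : |t| ≤ P * c)
    (hr : 0 < r) (hu : 0 < u) (hu2 : u ^ 2 = 1 + c ^ 2) (hru : P ≤ r * u) :
    t ^ 2 * c + (1 + c ^ 2) * |t| * P ≤ 2 * P * (r * (1 + c ^ 2) ^ 2) := by
  have habs : 0 ≤ |t| := abs_nonneg t
  have hs : (0:ℝ) < 1 + c ^ 2 := by positivity
  have ht2 : t ^ 2 ≤ P ^ 2 * c ^ 2 := by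
    have h := sq_abs t
    nlinarith [mul_nonneg hP.le hc]
  have hcu : c * (2 * c ^ 2 + 1) ≤ 2 * (1 + c ^ 2) * u := by
    have e : (2 * (1 + c ^ 2) * u) ^ 2 = 4 * (1 + c ^ 2) ^ 3 := by
      rw [mul_pow, mul_pow, hu2]; ring
    have hsq : (c * (2 * c ^ 2 + 1)) ^ 2 ≤ (2 * (1 + c ^ 2) * u) ^ 2 := by
      rw [e]; nlinarith [sq_nonneg c, sq_nonneg (c ^ 2)]
    have haob : 0 < c * (2 * c ^ 2 + 1) + 2 * (1 + c ^ 2) * u := by positivity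
    nlinarith [hsq, haob]
  have hmain : u * (t ^ 2 * c + (1 + c ^ 2) * |t| * P)
      ≤ 2 * P ^ 2 * (1 + c ^ 2) ^ 2 := by
    have h1 : t ^ 2 * c ≤ P ^ 2 * c ^ 3 := by nlinarith
    have h2 : |t| * P ≤ P ^ 2 * c := by nlinarith
    have h3 : u * (t ^ 2 * c + (1 + c ^ 2) * |t| * P)
        ≤ u * (P ^ 2 * c ^ 3 + (1 + c ^ 2) * (P ^ 2 * c)) := by
      have h12 := add_le_add h1 (mul_le_mul_of_nonneg_left h2 hs.le)
      nlinarith [mul_le_mul_of_nonneg_left h12 hu.le]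
    refine h3.trans ?_
    have h4 : u * (P ^ 2 * c ^ 3 + (1 + c ^ 2) * (P ^ 2 * c))
        = P ^ 2 * (u * (c * (2 * c ^ 2 + 1))) := by ring
    rw [h4]
    have h5 : u * (c * (2 * c ^ 2 + 1)) ≤ 2 * (1 + c ^ 2) * u ^ 2 := by
      nlinarith [mul_le_mul_of_nonneg_left hcu hu.le]
    calc P ^ 2 * (u * (c * (2 * c ^ 2 + 1)))
        ≤ P ^ 2 * (2 * (1 + c ^ 2) * u ^ 2) := by nlinarith [sq_nonneg P]
      _ = 2 * P ^ 2 * (1 + c ^ 2) ^ 2 := by rw [hu2]; ring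
  have hstep : 2 * P ^ 2 * (1 + c ^ 2) ^ 2
      ≤ u * (2 * P * (r * (1 + c ^ 2) ^ 2)) := by
    nlinarith [mul_le_mul_of_nonneg_left hru
      (by positivity : (0:ℝ) ≤ 2 * P * (1 + c ^ 2) ^ 2)]
  have := hmain.trans hstep
  exact le_of_mul_le_mul_left this hu

/-- With `γ = ∇M(x)`, `A = I - γγᵀ/(1+|γ|²)` (so `pᵀAp = |p|² - ⟨p,γ⟩²/(1+|γ|²)`),
and `H_M` the (symmetric) Hessian, the gradient formula
`g = [(pᵀγ)²H_Mγ - (1+|γ|²)(pᵀγ)H_Mp]/[√(pᵀAp)(1+|γ|²)²]`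
satisfies `|g| ≤ 2|p|‖H_M‖`. -/
theorem stmt14 (n : ℕ) (p γ : EuclideanSpace ℝ (Fin n)) (hp : p ≠ 0)
    (HM : EuclideanSpace ℝ (Fin n) →L[ℝ] EuclideanSpace ℝ (Fin n))
    (hsymm : ∀ u w : EuclideanSpace ℝ (Fin n), ⟪HM u, w⟫ = ⟪u, HM w⟫)
    (g : EuclideanSpace ℝ (Fin n))
    (hg : g = (1 / (Real.sqrt (⟪p, p⟫ - ⟪p, γ⟫ ^ 2 / (1 + ‖γ‖ ^ 2)) *
        (1 + ‖γ‖ ^ 2) ^ 2)) •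
        ((⟪p, γ⟫ ^ 2) • HM γ - ((1 + ‖γ‖ ^ 2) * ⟪p, γ⟫) • HM p)) :
    ‖g‖ ≤ 2 * ‖p‖ * ‖HM‖ := by
  set P := ‖p‖ with hPdef
  set c := ‖γ‖ with hcdef
  set t := ⟪p, γ⟫ with htdef
  have hP : 0 < P := norm_pos_iff.mpr hp
  have hc : 0 ≤ c := norm_nonneg _
  have hs : (0:ℝ) < 1 + c ^ 2 := by positivity
  have ht : |t| ≤ P * c := abs_real_inner_le_norm p γ
  have hpp : ⟪p, p⟫ = P ^ 2 := real_inner_self_eq_norm_sq p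
  set Q : ℝ := P ^ 2 - t ^ 2 / (1 + c ^ 2) with hQdef
  have ht2 : t ^ 2 ≤ P ^ 2 * c ^ 2 := by
    have h := sq_abs t
    nlinarith [abs_nonneg t, mul_nonneg hP.le hc]
  have hQpos : 0 < Q := by
    rw [hQdef, sub_pos, div_lt_iff₀ hs]
    nlinarith
  set r : ℝ := Real.sqrt Q with hrdef
  have hr : 0 < r := Real.sqrt_pos.mpr hQpos
  have hr2 : r ^ 2 = Q := Real.sq_sqrt hQpos.le
  set u : ℝ := Real.sqrt (1 + c ^ 2) with hudef
  have hu : 0 < u := Real.sqrt_pos.mpr hs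
  have hu2 : u ^ 2 = 1 + c ^ 2 := Real.sq_sqrt hs.le
  have hru : P ≤ r * u := by
    have hsq : P ^ 2 ≤ (r * u) ^ 2 := by
      have e : (r * u) ^ 2 = Q * (1 + c ^ 2) := by rw [mul_pow, hr2, hu2]
      rw [e, hQdef]
      have e2 : (P ^ 2 - t ^ 2 / (1 + c ^ 2)) * (1 + c ^ 2)
          = P ^ 2 * (1 + c ^ 2) - t ^ 2 := by field_simp
      rw [e2]; nlinarith
    nlinarith [mul_pos hr hu, hP]
  have hN : (0:ℝ) ≤ ‖HM‖ := norm_nonneg _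
  have hbr : ‖(t ^ 2) • HM γ - ((1 + c ^ 2) * t) • HM p‖
      ≤ t ^ 2 * (‖HM‖ * c) + (1 + c ^ 2) * |t| * (‖HM‖ * P) := by
    calc ‖(t ^ 2) • HM γ - ((1 + c ^ 2) * t) • HM p‖
        ≤ ‖(t ^ 2) • HM γ‖ + ‖((1 + c ^ 2) * t) • HM p‖ := norm_sub_le _ _
      _ = t ^ 2 * ‖HM γ‖ + ((1 + c ^ 2) * |t|) * ‖HM p‖ := by
          rw [norm_smul, norm_smul, Real.norm_eq_abs, Real.norm_eq_abs,
            abs_of_nonneg (sq_nonneg t), abs_mul, abs_of_pos hs]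
      _ ≤ t ^ 2 * (‖HM‖ * c) + (1 + c ^ 2) * |t| * (‖HM‖ * P) := by
          gcongr
          · exact HM.le_opNorm γ
          · exact HM.le_opNorm p
  have hgn : ‖g‖ = (1 / (r * (1 + c ^ 2) ^ 2)) *
      ‖(t ^ 2) • HM γ - ((1 + c ^ 2) * t) • HM p‖ := by
    rw [hg, norm_smul, Real.norm_eq_abs, hpp]
    rw [abs_of_pos (by positivity : (0:ℝ) < 1 / (r * (1 + c ^ 2) ^ 2))]
  rw [hgn, div_mul_eq_mul_div, one_mul,
    div_le_iff₀ (by positivity : (0:ℝ) < r * (1 + c ^ 2) ^ 2)]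
  have key : t ^ 2 * c + (1 + c ^ 2) * |t| * P ≤ 2 * P * (r * (1 + c ^ 2) ^ 2) :=
    stmt14_aux P c t r u hP hc ht hr hu hu2 hru
  calc ‖(t ^ 2) • HM γ - ((1 + c ^ 2) * t) • HM p‖
      ≤ t ^ 2 * (‖HM‖ * c) + (1 + c ^ 2) * |t| * (‖HM‖ * P) := hbr
    _ = ‖HM‖ * (t ^ 2 * c + (1 + c ^ 2) * |t| * P) := by ring
    _ ≤ ‖HM‖ * (2 * P * (r * (1 + c ^ 2) ^ 2)) :=
        mul_le_mul_of_nonneg_left key hN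
    _ = 2 * P * ‖HM‖ * (r * (1 + c ^ 2) ^ 2) := by ring
end
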